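/- Monotonicity of the entanglement of purification under local measurement: let ρ be a density matrix on H_A ⊗ H_B and let {A_i} be a finite family of operators on H_A with Σ_i A_i† A_i = I (a measurement by Alice). Set p_i = Tr((A_i ⊗ I)ρ(A_i† ⊗ I)) and, for p_i > 0, ρ_i = (A_i ⊗ I)ρ(A_i† ⊗ I)/p_i. Then Σ_i p_i E_p(ρ_i) ≤ E_p(ρ). -/

import Mathlib

noncomputable section
open scoped BigOperators Kronecker Matrix ComplexOrder
open Matrix

namespace QIT

def IsDensity {n : Type*} [Fintype n] [DecidableEq n] (ρ : Matrix n n ℂ) : Prop :=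
  ρ.PosSemidef ∧ ρ.trace = 1

noncomputable def vN {n : Type*} [Fintype n] [DecidableEq n] (ρ : Matrix n n ℂ) : ℝ :=
  if h : ρ.IsHermitian then ∑ i, -(h.eigenvalues i * Real.logb 2 (h.eigenvalues i)) else 0

def proj {n : Type*} (ψ : n → ℂ) : Matrix n n ℂ :=
  Matrix.of fun x y => ψ x * (starRingEnd ℂ) (ψ y)

def ptraceL {a b : Type*} [Fintype a] (ρ : Matrix (a × b) (a × b) ℂ) : Matrix b b ℂ :=
  Matrix.of fun i j => ∑ k, ρ (k, i) (k, j)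

def ptraceR {a b : Type*} [Fintype b] (ρ : Matrix (a × b) (a × b) ℂ) : Matrix a a ℂ :=
  Matrix.of fun i j => ∑ k, ρ (i, k) (j, k)

noncomputable def ent {X Y : Type*} [Fintype X] [Fintype Y] [DecidableEq Y]
    (ψ : X × Y → ℂ) : ℝ :=
  vN (ptraceL (proj ψ))

def IsPurification {A B : Type*} [Fintype A] [Fintype B] {dA' dB' : ℕ}
    (ρ : Matrix (A × B) (A × B) ℂ)
    (ψ : (A × Fin dA') × (B × Fin dB') → ℂ) : Prop :=
  (∑ x, ‖ψ x‖ ^ 2 = 1) ∧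
  ∀ a b a' b', ρ (a, b) (a', b') =
    ∑ a2 : Fin dA', ∑ b2 : Fin dB',
      ψ ((a, a2), (b, b2)) * (starRingEnd ℂ) (ψ ((a', a2), (b', b2)))

noncomputable def Ep {A B : Type*} [Fintype A] [Fintype B] [DecidableEq A] [DecidableEq B]
    (ρ : Matrix (A × B) (A × B) ℂ) : ℝ :=
  sInf { e : ℝ | ∃ (dA' dB' : ℕ) (ψ : (A × Fin dA') × (B × Fin dB') → ℂ),
    IsPurification ρ ψ ∧ e = ent ψ }

noncomputable def Iq {A B : Type*} [Fintype A] [Fintype B] [DecidableEq A] [DecidableEq B]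
    (ρ : Matrix (A × B) (A × B) ℂ) : ℝ :=
  vN (ptraceR ρ) + vN (ptraceL ρ) - vN ρ

open Classical in
noncomputable def msqrt {n : Type*} [Fintype n] [DecidableEq n] (M : Matrix n n ℂ) : Matrix n n ℂ :=
  if h : M.PosSemidef then
    (h.1.eigenvectorUnitary : Matrix n n ℂ) * diagonal ((↑) ∘ Real.sqrt ∘ h.1.eigenvalues) *
      (star h.1.eigenvectorUnitary : Matrix n n ℂ) else 0

noncomputable def fid {n : Type*} [Fintype n] [DecidableEq n] (ρ σ : Matrix n n ℂ) : ℝ :=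
  ((msqrt (msqrt ρ * σ * msqrt ρ)).trace).re

noncomputable def bures {n : Type*} [Fintype n] [DecidableEq n] (ρ σ : Matrix n n ℂ) : ℝ :=
  2 * Real.sqrt (1 - fid ρ σ)

noncomputable def traceNorm {n : Type*} [Fintype n] [DecidableEq n] (X : Matrix n n ℂ) : ℝ :=
  ((msqrt (Xᴴ * X)).trace).re

def IsPOVM {n : Type*} [Fintype n] [DecidableEq n] {k : ℕ} (M : Fin k → Matrix n n ℂ) : Prop :=
  (∀ i, (M i).PosSemidef) ∧ ∑ i, M i = 1

noncomputable def shannon {k : Type*} [Fintype k] (p : k → ℝ) : ℝ :=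
  ∑ i, -(p i * Real.logb 2 (p i))

noncomputable def miJoint {k l : Type*} [Fintype k] [Fintype l] (p : k × l → ℝ) : ℝ :=
  shannon (fun i => ∑ j, p (i, j)) + shannon (fun j => ∑ i, p (i, j)) - shannon p

noncomputable def Ic {A B : Type*} [Fintype A] [Fintype B] [DecidableEq A] [DecidableEq B]
    (ρ : Matrix (A × B) (A × B) ℂ) : ℝ :=
  sSup { e : ℝ | ∃ (k l : ℕ) (MA : Fin k → Matrix A A ℂ) (MB : Fin l → Matrix B B ℂ),
    IsPOVM MA ∧ IsPOVM MB ∧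
    e = miJoint (fun ij : Fin k × Fin l => (((MA ij.1 ⊗ₖ MB ij.2) * ρ).trace).re) }

noncomputable def probOf {A B : Type*} [Fintype A] [Fintype B] [DecidableEq A] [DecidableEq B]
    (M : Matrix A A ℂ) (ρ : Matrix (A × B) (A × B) ℂ) : ℝ :=
  (((M ⊗ₖ (1 : Matrix B B ℂ)) * ρ).trace).re

noncomputable def postB {A B : Type*} [Fintype A] [Fintype B] [DecidableEq A] [DecidableEq B]
    (M : Matrix A A ℂ) (ρ : Matrix (A × B) (A × B) ℂ) : Matrix B B ℂ :=
  ((probOf M ρ : ℂ))⁻¹ • ptraceL ((M ⊗ₖ (1 : Matrix B B ℂ)) * ρ)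

noncomputable def CA {A B : Type*} [Fintype A] [Fintype B] [DecidableEq A] [DecidableEq B]
    (ρ : Matrix (A × B) (A × B) ℂ) : ℝ :=
  sSup { c : ℝ | ∃ (k : ℕ) (M : Fin k → Matrix A A ℂ), IsPOVM M ∧
    c = vN (∑ i, (probOf (M i) ρ : ℂ) • postB (M i) ρ)
        - ∑ i, probOf (M i) ρ * vN (postB (M i) ρ) }

noncomputable def pauli : Fin 4 → Matrix (Fin 2) (Fin 2) ℂ :=
  ![1, !![0, 1; 1, 0], !![0, -Complex.I; Complex.I, 0], !![1, 0; 0, -1]]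

noncomputable def bell0 : Fin 2 × Fin 2 → ℂ :=
  fun x => if x.1 = x.2 then ((Real.sqrt 2)⁻¹ : ℝ) else 0

noncomputable def bell (i : Fin 4) : Fin 2 × Fin 2 → ℂ :=
  fun x => ∑ j, pauli i x.2 j * bell0 (x.1, j)

noncomputable def binEnt (x : ℝ) : ℝ :=
  -(x * Real.logb 2 x) - (1 - x) * Real.logb 2 (1 - x)

noncomputable def pauliChannel (p : Fin 4 → ℝ) (X : Matrix (Fin 2) (Fin 2) ℂ) :
    Matrix (Fin 2) (Fin 2) ℂ :=
  ∑ i, (p i : ℂ) • (pauli i * X * pauli i)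

noncomputable def holevoCap (Λ : Matrix (Fin 2) (Fin 2) ℂ → Matrix (Fin 2) (Fin 2) ℂ) : ℝ :=
  sSup { c : ℝ | ∃ (k : ℕ) (q : Fin k → ℝ) (ρs : Fin k → Matrix (Fin 2) (Fin 2) ℂ),
    (∀ i, 0 ≤ q i) ∧ (∑ i, q i = 1) ∧ (∀ i, IsDensity (ρs i)) ∧
    c = vN (∑ i, (q i : ℂ) • Λ (ρs i)) - ∑ i, q i * vN (Λ (ρs i)) }

def tensPow {A B : Type*} [Fintype A] [Fintype B]
    (ρ : Matrix (A × B) (A × B) ℂ) (n : ℕ) :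
    Matrix ((Fin n → A) × (Fin n → B)) ((Fin n → A) × (Fin n → B)) ℂ :=
  Matrix.of fun x y => ∏ t, ρ (x.1 t, x.2 t) (y.1 t, y.2 t)

noncomputable def measOut {dA dB : ℕ} (M : Matrix (Fin dA) (Fin dA) ℂ)
    (ρ : Matrix (Fin dA × Fin dB) (Fin dA × Fin dB) ℂ) :
    Matrix (Fin dA × Fin dB) (Fin dA × Fin dB) ℂ :=
  (M ⊗ₖ (1 : Matrix (Fin dB) (Fin dB) ℂ)) * ρ * (M ⊗ₖ (1 : Matrix (Fin dB) (Fin dB) ℂ))ᴴ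


section Aux

open Finset

open Finset in
lemma klein {I J K : Type*} [Fintype I] [Fintype J] [Fintype K]
    (p : I → ℝ) (lam : I → J → ℝ) (mu : K → ℝ) (c : I → J → K → ℝ)
    (hp : ∀ i, 0 ≤ p i)
    (hlam : ∀ i, p i ≠ 0 → ∀ j, 0 ≤ lam i j)
    (hc : ∀ i, p i ≠ 0 → ∀ j k, 0 ≤ c i j k)
    (hc1 : ∀ i, p i ≠ 0 → ∀ j, ∑ k, c i j k = 1)
    (hc2 : ∀ i, p i ≠ 0 → ∀ k, ∑ j, c i j k = 1)
    (hmu : ∀ k, mu k = ∑ i, ∑ j, p i * lam i j * c i j k)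
    (hp1 : ∑ i, p i = 1) :
    ∑ i, p i * ∑ j, -(lam i j * Real.logb 2 (lam i j))
      ≤ ∑ k, -(mu k * Real.logb 2 (mu k)) := by
  have hterm : ∀ i j k, 0 ≤ p i * lam i j * c i j k := by
    intro i j k
    by_cases hpi : p i = 0
    · simp [hpi]
    · exact mul_nonneg (mul_nonneg (hp i) (hlam i hpi j)) (hc i hpi j k)
  have hmunn : ∀ k, 0 ≤ mu k := by
    intro k
    rw [hmu k]
    exact Finset.sum_nonneg fun i _ => Finset.sum_nonneg fun j _ => hterm i j k
  have L : ∑ i, p i * ∑ j, -(lam i j * Real.logb 2 (lam i j))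
      = ∑ i, ∑ j, ∑ k, p i * lam i j * c i j k * (-Real.logb 2 (lam i j)) := by
    refine Finset.sum_congr rfl fun i _ => ?_
    by_cases hpi : p i = 0
    · simp [hpi]
    · rw [Finset.mul_sum]
      refine Finset.sum_congr rfl fun j _ => ?_
      have h1 : ∑ k, p i * lam i j * c i j k * (-Real.logb 2 (lam i j))
          = (∑ k, c i j k) * (p i * lam i j * (-Real.logb 2 (lam i j))) := by
        rw [Finset.sum_mul]
        exact Finset.sum_congr rfl fun k _ => by ring
      rw [h1, hc1 i hpi j, one_mul]; ring
  have R : ∑ k, -(mu k * Real.logb 2 (mu k))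
      = ∑ k, ∑ i, ∑ j, p i * lam i j * c i j k * (-Real.logb 2 (mu k)) := by
    refine Finset.sum_congr rfl fun k _ => ?_
    obtain ⟨X, hX⟩ : ∃ X, Real.logb 2 (mu k) = X := ⟨_, rfl⟩
    rw [hX, hmu k, ← mul_neg, Finset.sum_mul]
    exact Finset.sum_congr rfl fun i _ => Finset.sum_mul _ _ _
  have swap3 : ∀ (f : I → J → K → ℝ),
      ∑ i, ∑ j, ∑ k, f i j k = ∑ k, ∑ i, ∑ j, f i j k := by
    intro f
    calc ∑ i, ∑ j, ∑ k, f i j k = ∑ i, ∑ k, ∑ j, f i j k :=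
          Finset.sum_congr rfl fun i _ => Finset.sum_comm
      _ = ∑ k, ∑ i, ∑ j, f i j k := Finset.sum_comm
  have hlog2 : 0 < Real.log 2 := Real.log_pos one_lt_two
  have key : ∀ i j k, p i * lam i j * c i j k * (-Real.logb 2 (lam i j))
      ≤ p i * lam i j * c i j k * (-Real.logb 2 (mu k))
        - (p i * lam i j * c i j k - p i * c i j k * mu k) / Real.log 2 := by
    intro i j k
    by_cases hpi : p i = 0
    · simp [hpi]
    by_cases h0 : p i * lam i j * c i j k = 0
    · have h1 : 0 ≤ (p i * c i j k * mu k) / Real.log 2 :=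
        div_nonneg (mul_nonneg (mul_nonneg (hp i) (hc i hpi j k)) (hmunn k)) hlog2.le
      rw [h0, zero_mul, zero_mul]
      have h2 : (0 - p i * c i j k * mu k) / Real.log 2
          = -(p i * c i j k * mu k / Real.log 2) := by ring
      rw [h2]
      linarith
    · have hpp : 0 < p i := lt_of_le_of_ne (hp i) (Ne.symm hpi)
      have hl : 0 < lam i j := by
        rcases lt_or_eq_of_le (hlam i hpi j) with h | h
        · exact h
        · exact absurd (by rw [← h]; ring) h0
      have hcc : 0 < c i j k := by
        rcases lt_or_eq_of_le (hc i hpi j k) with h | h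
        · exact h
        · exact absurd (by rw [← h]; ring) h0
      have hmuk : 0 < mu k := by
        have h1 : p i * lam i j * c i j k ≤ ∑ j, p i * lam i j * c i j k :=
          Finset.single_le_sum (fun j _ => hterm i j k) (Finset.mem_univ j)
        have h2 : ∑ j, p i * lam i j * c i j k ≤ ∑ i, ∑ j, p i * lam i j * c i j k :=
          Finset.single_le_sum (fun i _ => Finset.sum_nonneg fun j _ => hterm i j k)
            (Finset.mem_univ i)
        have h3 : 0 < p i * lam i j * c i j k := by positivity
        rw [hmu k]; linarith
      have hlog : Real.log (mu k) - Real.log (lam i j) ≤ mu k / lam i j - 1 := by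
        have h := Real.log_le_sub_one_of_pos (div_pos hmuk hl)
        rwa [Real.log_div hmuk.ne' hl.ne'] at h
      have hfield : p i * lam i j * c i j k * (mu k / lam i j) = p i * c i j k * mu k := by
        field_simp
      have hcore : p i * lam i j * c i j k - p i * c i j k * mu k
          ≤ p i * lam i j * c i j k * (Real.log (lam i j) - Real.log (mu k)) := by
        have h4 : 0 < p i * lam i j * c i j k := by positivity
        nlinarith [mul_le_mul_of_nonneg_left hlog h4.le]
      have hgoal : (p i * lam i j * c i j k - p i * c i j k * mu k) / Real.log 2
          ≤ p i * lam i j * c i j k * (Real.logb 2 (lam i j) - Real.logb 2 (mu k)) := by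
        have hd : Real.logb 2 (lam i j) - Real.logb 2 (mu k)
            = (Real.log (lam i j) - Real.log (mu k)) / Real.log 2 := by
          rw [Real.logb, Real.logb]; ring
        rw [hd, ← mul_div_assoc]
        gcongr
      nlinarith [hgoal]
  have hC : ∑ i, ∑ j, ∑ k,
      (p i * lam i j * c i j k - p i * c i j k * mu k) / Real.log 2 = 0 := by
    have e1 : ∑ i, ∑ j, ∑ k, p i * lam i j * c i j k = ∑ k, mu k := by
      rw [swap3]
      exact Finset.sum_congr rfl fun k _ => (hmu k).symm
    have e2 : ∑ i, ∑ j, ∑ k, p i * c i j k * mu k = ∑ k, mu k := by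
      rw [swap3]
      refine Finset.sum_congr rfl fun k _ => ?_
      have h5 : ∀ i, ∑ j, p i * c i j k * mu k = p i * mu k := by
        intro i
        by_cases hpi : p i = 0
        · simp [hpi]
        · have : ∑ j, p i * c i j k * mu k = (∑ j, c i j k) * (p i * mu k) := by
            rw [Finset.sum_mul]
            exact Finset.sum_congr rfl fun j _ => by ring
          rw [this, hc2 i hpi k, one_mul]
      rw [Finset.sum_congr rfl fun i _ => h5 i, ← Finset.sum_mul, hp1, one_mul]
    have e3 : ∑ i, ∑ j, ∑ k,
        (p i * lam i j * c i j k - p i * c i j k * mu k) = 0 := by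
      simp only [Finset.sum_sub_distrib, e1, e2, sub_self]
    calc ∑ i, ∑ j, ∑ k, (p i * lam i j * c i j k - p i * c i j k * mu k) / Real.log 2
        = (∑ i, ∑ j, ∑ k, (p i * lam i j * c i j k - p i * c i j k * mu k)) / Real.log 2 := by
          simp only [← Finset.sum_div]
      _ = 0 := by rw [e3, zero_div]
  rw [L, R, ← swap3]
  calc ∑ i, ∑ j, ∑ k, p i * lam i j * c i j k * (-Real.logb 2 (lam i j))
      ≤ ∑ i, ∑ j, ∑ k, (p i * lam i j * c i j k * (-Real.logb 2 (mu k))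
          - (p i * lam i j * c i j k - p i * c i j k * mu k) / Real.log 2) :=
        Finset.sum_le_sum fun i _ => Finset.sum_le_sum fun j _ =>
          Finset.sum_le_sum fun k _ => key i j k
    _ = ∑ i, ∑ j, ∑ k, p i * lam i j * c i j k * (-Real.logb 2 (mu k)) := by
        simp only [Finset.sum_sub_distrib, hC, sub_zero]

open Classical in
lemma vN_concave {n I : Type*} [Fintype n] [DecidableEq n] [Fintype I]
    (p : I → ℝ) (σ : I → Matrix n n ℂ)
    (hp : ∀ i, 0 ≤ p i) (hp1 : ∑ i, p i = 1)
    (hσ : ∀ i, p i ≠ 0 → (σ i).PosSemidef) :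
    ∑ i, p i * vN (σ i) ≤ vN (∑ i, (p i : ℂ) • σ i) := by
  have hhermi : ∀ i, ((p i : ℂ) • σ i).IsHermitian := by
    intro i
    by_cases hpi : p i = 0
    · simp [hpi]
    · have h1 := (hσ i hpi).1
      unfold Matrix.IsHermitian at h1 ⊢
      rw [Matrix.conjTranspose_smul, h1]
      congr 1
      simp [Complex.star_def, Complex.conj_ofReal]
  have hherm : (∑ i, (p i : ℂ) • σ i).IsHermitian := by
    unfold Matrix.IsHermitian
    rw [Matrix.conjTranspose_sum]
    exact Finset.sum_congr rfl fun i _ => hhermi i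
  set σbar := ∑ i, (p i : ℂ) • σ i with hσbar
  set V : Matrix n n ℂ := (hherm.eigenvectorUnitary : Matrix n n ℂ) with hV
  set mu : n → ℝ := hherm.eigenvalues with hmudef
  set lam : I → n → ℝ := fun i => if h : (σ i).PosSemidef then h.1.eigenvalues else 0 with hlamdef
  set U : I → Matrix n n ℂ :=
    fun i => if h : (σ i).PosSemidef then (h.1.eigenvectorUnitary : Matrix n n ℂ) else 1
    with hUdef
  set W : I → Matrix n n ℂ := fun i => (U i)ᴴ * V with hWdef
  set c : I → n → n → ℝ := fun i j k => Complex.normSq (W i j k) with hcdef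
  -- unitarity facts
  have hVV : Vᴴ * V = 1 := by
    rw [← Matrix.star_eq_conjTranspose]
    exact Unitary.coe_star_mul_self _
  have hVV' : V * Vᴴ = 1 := by
    rw [← Matrix.star_eq_conjTranspose]
    exact Unitary.coe_mul_star_self _
  have hUU : ∀ i, (U i)ᴴ * U i = 1 ∧ U i * (U i)ᴴ = 1 := by
    intro i
    simp only [hUdef]
    by_cases h : (σ i).PosSemidef
    · rw [dif_pos h, ← Matrix.star_eq_conjTranspose]
      exact ⟨Unitary.coe_star_mul_self _, Unitary.coe_mul_star_self _⟩
    · rw [dif_neg h]; simp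
  have hWW : ∀ i, (W i)ᴴ * W i = 1 ∧ W i * (W i)ᴴ = 1 := by
    intro i
    constructor
    · rw [hWdef]
      show ((U i)ᴴ * V)ᴴ * ((U i)ᴴ * V) = 1
      rw [Matrix.conjTranspose_mul, Matrix.conjTranspose_conjTranspose]
      calc Vᴴ * U i * ((U i)ᴴ * V) = Vᴴ * (U i * (U i)ᴴ) * V := by
            simp only [Matrix.mul_assoc]
        _ = 1 := by rw [(hUU i).2, Matrix.mul_one, hVV]
    · rw [hWdef]
      show ((U i)ᴴ * V) * ((U i)ᴴ * V)ᴴ = 1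
      rw [Matrix.conjTranspose_mul, Matrix.conjTranspose_conjTranspose]
      calc (U i)ᴴ * V * (Vᴴ * U i) = (U i)ᴴ * (V * Vᴴ) * U i := by
            simp only [Matrix.mul_assoc]
        _ = 1 := by rw [hVV', Matrix.mul_one, (hUU i).1]
  -- c sums
  have hc1 : ∀ i j, ∑ k, c i j k = 1 := by
    intro i j
    have h1 : (W i * (W i)ᴴ) j j = 1 := by rw [(hWW i).2, Matrix.one_apply_eq]
    rw [Matrix.mul_apply] at h1
    have h2 : ∀ k, W i j k * (W i)ᴴ k j = ((c i j k : ℝ) : ℂ) := by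
      intro k
      rw [Matrix.conjTranspose_apply, hcdef]
      exact Complex.mul_conj _
    rw [Finset.sum_congr rfl fun k _ => h2 k] at h1
    exact_mod_cast h1
  have hc2 : ∀ i k, ∑ j, c i j k = 1 := by
    intro i k
    have h1 : ((W i)ᴴ * W i) k k = 1 := by rw [(hWW i).1, Matrix.one_apply_eq]
    rw [Matrix.mul_apply] at h1
    have h2 : ∀ j, (W i)ᴴ k j * W i j k = ((c i j k : ℝ) : ℂ) := by
      intro j
      rw [Matrix.conjTranspose_apply, hcdef]
      simp [mul_comm, Complex.mul_conj]
    rw [Finset.sum_congr rfl fun j _ => h2 j] at h1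
    exact_mod_cast h1
  -- the diagonalization identity
  have hdiag : Vᴴ * σbar * V = Matrix.diagonal (RCLike.ofReal ∘ mu) := by
    have hst := hherm.spectral_theorem
    rw [Unitary.conjStarAlgAut_apply, Matrix.star_eq_conjTranspose] at hst
    rw [← hV, ← hmudef] at hst
    calc Vᴴ * σbar * V
        = Vᴴ * (V * Matrix.diagonal (RCLike.ofReal ∘ mu) * Vᴴ) * V := by rw [← hst]
      _ = Matrix.diagonal (RCLike.ofReal ∘ mu) := by
          simp only [Matrix.mul_assoc, hVV', Matrix.mul_one]
          rw [← Matrix.mul_assoc, hVV, Matrix.one_mul, Matrix.mul_one]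
  have hconj : ∀ (w : ℂ) (r : ℝ), (starRingEnd ℂ) w * (r : ℂ) * w
      = ((r * Complex.normSq w : ℝ) : ℂ) := by
    intro w r
    rw [Complex.ofReal_mul, ← Complex.mul_conj]
    ring
  have hmu : ∀ k, ((mu k : ℝ) : ℂ) = ∑ i, (p i : ℂ) * ∑ j, ((lam i j * c i j k : ℝ) : ℂ) := by
    intro k
    have h1 : Matrix.diagonal (RCLike.ofReal ∘ mu) k k = ((mu k : ℝ) : ℂ) := by
      simp [Matrix.diagonal_apply_eq]
    rw [← h1, ← hdiag]
    have h2 : Vᴴ * σbar * V = ∑ i, (p i : ℂ) • (Vᴴ * σ i * V) := by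
      rw [hσbar, Matrix.mul_sum, Matrix.sum_mul]
      exact Finset.sum_congr rfl fun i _ => by rw [Matrix.mul_smul, Matrix.smul_mul]
    rw [h2, Matrix.sum_apply]
    refine Finset.sum_congr rfl fun i _ => ?_
    rw [Matrix.smul_apply, smul_eq_mul]
    by_cases hpi : p i = 0
    · simp [hpi]
    congr 1
    have h := hσ i hpi
    have hUi : U i = (h.1.eigenvectorUnitary : Matrix n n ℂ) := by
      simp only [hUdef]; rw [dif_pos h]
    have hlami : lam i = h.1.eigenvalues := by
      simp only [hlamdef]; rw [dif_pos h]
    have hsp := h.1.spectral_theorem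
    rw [Unitary.conjStarAlgAut_apply, Matrix.star_eq_conjTranspose, ← hUi, ← hlami] at hsp
    have h3 : Vᴴ * σ i * V = (W i)ᴴ * Matrix.diagonal (RCLike.ofReal ∘ lam i) * W i := by
      rw [hsp, hWdef]
      show Vᴴ * (U i * Matrix.diagonal (RCLike.ofReal ∘ lam i) * (U i)ᴴ) * V
          = ((U i)ᴴ * V)ᴴ * Matrix.diagonal (RCLike.ofReal ∘ lam i) * ((U i)ᴴ * V)
      rw [Matrix.conjTranspose_mul, Matrix.conjTranspose_conjTranspose]
      simp only [Matrix.mul_assoc]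
    rw [h3, Matrix.mul_apply]
    refine Finset.sum_congr rfl fun j _ => ?_
    rw [Matrix.mul_diagonal, Matrix.conjTranspose_apply]
    have h4 : RCLike.ofReal ∘ lam i = fun j => ((lam i j : ℝ) : ℂ) := rfl
    rw [h4]
    exact hconj (W i j k) (lam i j)
  have hmureal : ∀ k, mu k = ∑ i, ∑ j, p i * lam i j * c i j k := by
    intro k
    have h1 := hmu k
    have h2 : ((∑ i, ∑ j, p i * lam i j * c i j k : ℝ) : ℂ)
        = ∑ i, (p i : ℂ) * ∑ j, ((lam i j * c i j k : ℝ) : ℂ) := by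
      push_cast
      simp only [Finset.mul_sum]
      exact Finset.sum_congr rfl fun i _ => Finset.sum_congr rfl fun j _ => by ring
    have h3 : ((mu k : ℝ) : ℂ) = ((∑ i, ∑ j, p i * lam i j * c i j k : ℝ) : ℂ) :=
      h1.trans h2.symm
    exact_mod_cast h3
  have hlam' : ∀ i, p i ≠ 0 → ∀ j, 0 ≤ lam i j := by
    intro i hpi j
    have h := hσ i hpi
    have hlami : lam i = h.1.eigenvalues := by
      simp only [hlamdef]; rw [dif_pos h]
    rw [hlami]
    exact h.eigenvalues_nonneg j
  calc ∑ i, p i * vN (σ i)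
      = ∑ i, p i * ∑ j, -(lam i j * Real.logb 2 (lam i j)) := by
        refine Finset.sum_congr rfl fun i _ => ?_
        by_cases hpi : p i = 0
        · simp [hpi]
        · congr 1
          have h := hσ i hpi
          have hlami : lam i = h.1.eigenvalues := by
            simp only [hlamdef]; rw [dif_pos h]
          simp only [vN]
          rw [dif_pos h.1, hlami]
    _ ≤ ∑ k, -(mu k * Real.logb 2 (mu k)) :=
        klein p lam mu c hp hlam' (fun i _ j k => Complex.normSq_nonneg _)
          (fun i _ j => hc1 i j) (fun i _ k => hc2 i k) hmureal hp1
    _ = vN σbar := by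
        simp only [vN]
        rw [dif_pos hherm]

lemma trace_eq_sum_eigenvalues {n : Type*} [Fintype n] [DecidableEq n]
    (A : Matrix n n ℂ) (hA : A.IsHermitian) :
    A.trace = ∑ i, (hA.eigenvalues i : ℂ) := by
  conv_lhs => rw [hA.spectral_theorem, Unitary.conjStarAlgAut_apply]
  rw [Matrix.trace_mul_cycle]
  rw [show (star (hA.eigenvectorUnitary : Matrix n n ℂ)) * (hA.eigenvectorUnitary : Matrix n n ℂ)
      = 1 from Unitary.coe_star_mul_self _, one_mul]
  simp [Matrix.trace_diagonal]

lemma mul_conj_eq_norm (z : ℂ) : z * (starRingEnd ℂ) z = ((‖z‖ ^ 2 : ℝ) : ℂ) := by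
  rw [Complex.mul_conj]
  norm_cast
  rw [Complex.normSq_eq_norm_sq]

lemma ptraceL_proj_posSemidef {X Y : Type*} [Fintype X] [Fintype Y]
    (ψ : X × Y → ℂ) : (ptraceL (proj ψ)).PosSemidef := by
  have h : ptraceL (proj ψ)
      = (Matrix.of fun (k : X) (y : Y) => (starRingEnd ℂ) (ψ (k, y)))ᴴ
        * (Matrix.of fun (k : X) (y : Y) => (starRingEnd ℂ) (ψ (k, y))) := by
    ext y y'
    simp only [ptraceL, proj, Matrix.of_apply, Matrix.mul_apply, Matrix.conjTranspose_apply]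
    refine Finset.sum_congr rfl fun x _ => ?_
    simp only [Matrix.of_apply, RingHomCompTriple.comp_apply, RCLike.star_def,
      Complex.conj_conj, RingHom.id_apply]
  rw [h]
  exact Matrix.posSemidef_conjTranspose_mul_self _

lemma trace_eq_norm {A B : Type*} [Fintype A] [Fintype B] {dA' dB' : ℕ}
    (τ : Matrix (A × B) (A × B) ℂ)
    (ψ : (A × Fin dA') × (B × Fin dB') → ℂ)
    (h : ∀ a b a' b', τ (a, b) (a', b') =
      ∑ a2 : Fin dA', ∑ b2 : Fin dB',
        ψ ((a, a2), (b, b2)) * (starRingEnd ℂ) (ψ ((a', a2), (b', b2)))) :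
    τ.trace = ((∑ x, ‖ψ x‖ ^ 2 : ℝ) : ℂ) := by
  have h1 : τ.trace = ∑ a, ∑ b, τ (a, b) (a, b) := by
    calc τ.trace = ∑ x : A × B, τ x x := rfl
      _ = ∑ a, ∑ b, τ (a, b) (a, b) := by rw [Fintype.sum_prod_type]
  rw [h1]
  have h2 : ((∑ x, ‖ψ x‖ ^ 2 : ℝ) : ℂ)
      = ∑ a, ∑ a2, ∑ b, ∑ b2, ((‖ψ ((a, a2), (b, b2))‖ ^ 2 : ℝ) : ℂ) := by
    push_cast
    conv_lhs => rw [Fintype.sum_prod_type]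
    conv_lhs => rw [Fintype.sum_prod_type]
    refine Finset.sum_congr rfl fun a _ => Finset.sum_congr rfl fun a2 _ => ?_
    rw [Fintype.sum_prod_type]
  rw [h2]
  refine Finset.sum_congr rfl fun a _ => ?_
  conv_rhs => rw [Finset.sum_comm]
  refine Finset.sum_congr rfl fun b _ => ?_
  rw [h a b a b]
  exact Finset.sum_congr rfl fun a2 _ => Finset.sum_congr rfl fun b2 _ =>
    mul_conj_eq_norm _

lemma ent_nonneg {X Y : Type*} [Fintype X] [Fintype Y] [DecidableEq Y]
    (ψ : X × Y → ℂ) (h : ∑ x, ‖ψ x‖ ^ 2 = 1) : 0 ≤ ent ψ := by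
  have hpsd := ptraceL_proj_posSemidef ψ
  have hherm := hpsd.1
  have htrace : (ptraceL (proj ψ)).trace = ((∑ x, ‖ψ x‖ ^ 2 : ℝ) : ℂ) := by
    calc (ptraceL (proj ψ)).trace
        = ∑ y, ∑ k, ψ (k, y) * (starRingEnd ℂ) (ψ (k, y)) := rfl
      _ = ∑ y, ∑ k, ((‖ψ (k, y)‖ ^ 2 : ℝ) : ℂ) :=
          Finset.sum_congr rfl fun y _ => Finset.sum_congr rfl fun k _ =>
            mul_conj_eq_norm _
      _ = ((∑ x, ‖ψ x‖ ^ 2 : ℝ) : ℂ) := by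
          push_cast
          rw [Fintype.sum_prod_type]
          exact Finset.sum_comm
  have hsum : ∑ j, hherm.eigenvalues j = 1 := by
    have h1 := trace_eq_sum_eigenvalues _ hherm
    rw [htrace, h] at h1
    have h2 : ((1 : ℝ) : ℂ) = ((∑ j, hherm.eigenvalues j : ℝ) : ℂ) := by
      rw [h1]; push_cast; rfl
    exact_mod_cast h2.symm
  have hek : ∀ j, hherm.eigenvalues j ≤ 1 := by
    intro j
    rw [← hsum]
    exact Finset.single_le_sum (fun j _ => hpsd.eigenvalues_nonneg j) (Finset.mem_univ j)
  show 0 ≤ vN (ptraceL (proj ψ))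
  simp only [vN]
  rw [dif_pos hherm]
  refine Finset.sum_nonneg fun j _ => ?_
  have h0 := hpsd.eigenvalues_nonneg j
  rcases eq_or_lt_of_le h0 with hz | hz
  · simp [← hz]
  · have hl : Real.logb 2 (hherm.eigenvalues j) ≤ 0 :=
      Real.logb_nonpos (by norm_num) h0 (hek j)
    nlinarith

lemma Ep_le_ent {A B : Type*} [Fintype A] [Fintype B] [DecidableEq A] [DecidableEq B]
    {dA' dB' : ℕ} (ρ : Matrix (A × B) (A × B) ℂ)
    (ψ : (A × Fin dA') × (B × Fin dB') → ℂ) (h : IsPurification ρ ψ) :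
    Ep ρ ≤ ent ψ := by
  refine csInf_le ⟨0, fun e he => ?_⟩ ⟨dA', dB', ψ, h, rfl⟩
  obtain ⟨d1, d2, ψ', hψ', rfl⟩ := he
  exact ent_nonneg _ hψ'.1

lemma purif_norm {A B : Type*} [Fintype A] [Fintype B] {dA' dB' : ℕ}
    (τ : Matrix (A × B) (A × B) ℂ)
    (ψ : (A × Fin dA') × (B × Fin dB') → ℂ) (htr : τ.trace = 1)
    (h : ∀ a b a' b', τ (a, b) (a', b') =
      ∑ a2 : Fin dA', ∑ b2 : Fin dB',
        ψ ((a, a2), (b, b2)) * (starRingEnd ℂ) (ψ ((a', a2), (b', b2)))) :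
    ∑ x, ‖ψ x‖ ^ 2 = 1 := by
  have h1 := trace_eq_norm τ ψ h
  rw [htr] at h1
  exact_mod_cast h1.symm

lemma exists_purification {dA dB : ℕ}
    (ρ : Matrix (Fin dA × Fin dB) (Fin dA × Fin dB) ℂ) (hρ : IsDensity ρ) :
    ∃ ψ : (Fin dA × Fin (dA * dB)) × (Fin dB × Fin 1) → ℂ, IsPurification ρ ψ := by
  obtain ⟨S, hS⟩ : ∃ S : Matrix (Fin dA × Fin dB) (Fin dA × Fin dB) ℂ, S * Sᴴ = ρ := by
    open scoped MatrixOrder in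
    obtain ⟨B, hB⟩ := CStarAlgebra.nonneg_iff_eq_star_mul_self.mp (hρ.1 : ρ.PosSemidef).nonneg
    exact ⟨Bᴴ, by rw [hB, Matrix.conjTranspose_conjTranspose, Matrix.star_eq_conjTranspose]⟩
  refine ⟨fun x => S (x.1.1, x.2.1) (finProdFinEquiv.symm x.1.2), ?_⟩
  have hent : ∀ a b a' b', ρ (a, b) (a', b') =
      ∑ a2 : Fin (dA * dB), ∑ b2 : Fin 1,
        S (a, b) (finProdFinEquiv.symm a2)
          * (starRingEnd ℂ) (S (a', b') (finProdFinEquiv.symm a2)) := by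
    intro a b a' b'
    calc ρ (a, b) (a', b') = (S * Sᴴ) (a, b) (a', b') := by
          rw [hS]
      _ = ∑ x : Fin dA × Fin dB, S (a, b) x * Sᴴ x (a', b') :=
          Matrix.mul_apply
      _ = ∑ x : Fin dA × Fin dB,
            S (a, b) x * (starRingEnd ℂ) (S (a', b') x) := by
          refine Finset.sum_congr rfl fun x _ => ?_
          congr 1
      _ = ∑ a2 : Fin (dA * dB),
            S (a, b) (finProdFinEquiv.symm a2)
              * (starRingEnd ℂ) (S (a', b') (finProdFinEquiv.symm a2)) :=
          (Equiv.sum_comp finProdFinEquiv.symm _).symm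
      _ = _ := by
          refine Finset.sum_congr rfl fun a2 _ => ?_
          rw [Fin.sum_univ_one]
  exact ⟨purif_norm ρ _ hρ.2 hent, hent⟩

end Aux

set_option maxHeartbeats 1600000 in
/-- monotonicity of E_p under a local measurement {Aᵢ} by Alice
(Σᵢ Aᵢ† Aᵢ = I): with pᵢ = Tr((Aᵢ⊗I)ρ(Aᵢ†⊗I)) and ρᵢ = (Aᵢ⊗I)ρ(Aᵢ†⊗I)/pᵢ, one has
Σᵢ pᵢ E_p(ρᵢ) ≤ E_p(ρ). -/
theorem stmt8 {dA dB k : ℕ}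
    (ρ : Matrix (Fin dA × Fin dB) (Fin dA × Fin dB) ℂ) (hρ : IsDensity ρ)
    (M : Fin k → Matrix (Fin dA) (Fin dA) ℂ)
    (hM : ∑ i, (M i)ᴴ * M i = 1) :
    ∑ i, ((measOut (M i) ρ).trace).re *
        Ep (((((measOut (M i) ρ).trace).re : ℂ)⁻¹) • measOut (M i) ρ) ≤ Ep ρ := by
  classical
  obtain ⟨ψ0, hψ0⟩ := exists_purification ρ hρ
  refine le_csInf ⟨ent ψ0, dA * dB, 1, ψ0, hψ0, rfl⟩ ?_
  rintro e ⟨dA', dB', ψ, hψ, rfl⟩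
  set χ : Fin k → (Fin dA × Fin dA') × (Fin dB × Fin dB') → ℂ :=
    fun i x => ∑ c0, M i x.1.1 c0 * ψ ((c0, x.1.2), x.2) with hχdef
  set p : Fin k → ℝ := fun i => ((measOut (M i) ρ).trace).re with hpdef
  set φ : Fin k → (Fin dA × Fin dA') × (Fin dB × Fin dB') → ℂ :=
    fun i x => (((Real.sqrt (p i) : ℝ) : ℂ))⁻¹ * χ i x with hφdef
  set σf : Fin k → Matrix (Fin dB × Fin dB') (Fin dB × Fin dB') ℂ :=
    fun i => ptraceL (proj (φ i)) with hσfdef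
  -- entries of measOut in terms of matrix elements of ρ
  have hMeasEntry : ∀ i a b a' b', measOut (M i) ρ (a, b) (a', b')
      = ∑ c0, ∑ c1, M i a c0 * ρ (c0, b) (c1, b') * (starRingEnd ℂ) (M i a' c1) := by
    intro i a b a' b'
    simp only [measOut, Matrix.mul_apply, Matrix.conjTranspose_apply,
      Matrix.kroneckerMap_apply, Fintype.sum_prod_type, Matrix.one_apply,
      mul_ite, mul_one, mul_zero, ite_mul, zero_mul, Finset.sum_ite_eq,
      Finset.sum_ite_eq', Finset.mem_univ, if_true, map_sum, _root_.map_mul,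
      Finset.sum_mul, Finset.mul_sum, apply_ite, _root_.map_one, _root_.map_zero,
      star_zero, Finset.sum_const_zero, RCLike.star_def]
    exact Finset.sum_comm
  -- entries of measOut in terms of χ
  have hMeas : ∀ i a b a' b', measOut (M i) ρ (a, b) (a', b')
      = ∑ a2, ∑ b2, χ i ((a, a2), (b, b2))
          * (starRingEnd ℂ) (χ i ((a', a2), (b', b2))) := by
    intro i a b a' b'
    rw [hMeasEntry i a b a' b']
    have e1 : ∀ c0 c1, M i a c0 * ρ (c0, b) (c1, b') * (starRingEnd ℂ) (M i a' c1)
        = ∑ a2, ∑ b2, (M i a c0 * ψ ((c0, a2), (b, b2)))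
            * (starRingEnd ℂ) (M i a' c1 * ψ ((c1, a2), (b', b2))) := by
      intro c0 c1
      rw [hψ.2]
      simp only [Finset.mul_sum, Finset.sum_mul, _root_.map_mul]
      exact Finset.sum_congr rfl fun a2 _ => Finset.sum_congr rfl fun b2 _ => by ring
    rw [Finset.sum_congr rfl fun c0 _ => Finset.sum_congr rfl fun c1 _ => e1 c0 c1]
    have e2 : ∀ (f : Fin dA → Fin dA → Fin dA' → Fin dB' → ℂ),
        ∑ c0, ∑ c1, ∑ a2, ∑ b2, f c0 c1 a2 b2
          = ∑ a2, ∑ b2, ∑ c0, ∑ c1, f c0 c1 a2 b2 := by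
      intro f
      calc ∑ c0, ∑ c1, ∑ a2, ∑ b2, f c0 c1 a2 b2
          = ∑ c0, ∑ a2, ∑ c1, ∑ b2, f c0 c1 a2 b2 :=
            Finset.sum_congr rfl fun c0 _ => Finset.sum_comm
        _ = ∑ a2, ∑ c0, ∑ c1, ∑ b2, f c0 c1 a2 b2 := Finset.sum_comm
        _ = ∑ a2, ∑ c0, ∑ b2, ∑ c1, f c0 c1 a2 b2 :=
            Finset.sum_congr rfl fun a2 _ => Finset.sum_congr rfl fun c0 _ =>
              Finset.sum_comm
        _ = ∑ a2, ∑ b2, ∑ c0, ∑ c1, f c0 c1 a2 b2 :=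
            Finset.sum_congr rfl fun a2 _ => Finset.sum_comm
    rw [e2]
    refine Finset.sum_congr rfl fun a2 _ => Finset.sum_congr rfl fun b2 _ => ?_
    rw [show χ i ((a, a2), (b, b2)) = ∑ c0, M i a c0 * ψ ((c0, a2), (b, b2)) from rfl,
      show χ i ((a', a2), (b', b2)) = ∑ c1, M i a' c1 * ψ ((c1, a2), (b', b2)) from rfl,
      map_sum, Finset.sum_mul_sum]
  -- trace of measOut
  have htr : ∀ i, (measOut (M i) ρ).trace = ((∑ x, ‖χ i x‖ ^ 2 : ℝ) : ℂ) :=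
    fun i => trace_eq_norm _ _ (hMeas i)
  have hpval : ∀ i, p i = ∑ x, ‖χ i x‖ ^ 2 := by
    intro i
    show ((measOut (M i) ρ).trace).re = _
    rw [htr i, Complex.ofReal_re]
  have hpnn : ∀ i, 0 ≤ p i := by
    intro i
    rw [hpval i]
    exact Finset.sum_nonneg fun x _ => sq_nonneg _
  have hptrC : ∀ i, (measOut (M i) ρ).trace = ((p i : ℝ) : ℂ) := by
    intro i
    rw [htr i, hpval i]
  have hχ0 : ∀ i, p i = 0 → ∀ x, χ i x = 0 := by
    intro i h0 x
    have hs : ∑ x, ‖χ i x‖ ^ 2 = 0 := by rw [← hpval i]; exact h0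
    have h1 := (Finset.sum_eq_zero_iff_of_nonneg
      (fun x _ => sq_nonneg ‖χ i x‖)).mp hs x (Finset.mem_univ x)
    exact norm_eq_zero.mp (sq_eq_zero_iff.mp h1)
  have hone : ∀ i, p i ≠ 0 →
      ((p i : ℝ) : ℂ) * (((Real.sqrt (p i) : ℝ) : ℂ))⁻¹
        * (starRingEnd ℂ) ((((Real.sqrt (p i) : ℝ) : ℂ))⁻¹) = 1 := by
    intro i hpi
    rw [map_inv₀, Complex.conj_ofReal, mul_assoc, ← mul_inv, ← Complex.ofReal_mul,
      Real.mul_self_sqrt (hpnn i), mul_inv_cancel₀ (Complex.ofReal_ne_zero.mpr hpi)]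
  -- purification of the post-measurement state
  have hpur : ∀ i, p i ≠ 0 →
      IsPurification (((p i : ℝ) : ℂ)⁻¹ • measOut (M i) ρ) (φ i) := by
    intro i hpi
    have hent : ∀ a b a' b', (((p i : ℝ) : ℂ)⁻¹ • measOut (M i) ρ) (a, b) (a', b')
        = ∑ a2, ∑ b2, φ i ((a, a2), (b, b2))
            * (starRingEnd ℂ) (φ i ((a', a2), (b', b2))) := by
      intro a b a' b'
      rw [Matrix.smul_apply, smul_eq_mul, hMeas i a b a' b', Finset.mul_sum]
      refine Finset.sum_congr rfl fun a2 _ => ?_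
      rw [Finset.mul_sum]
      refine Finset.sum_congr rfl fun b2 _ => ?_
      rw [show φ i ((a, a2), (b, b2))
          = (((Real.sqrt (p i) : ℝ) : ℂ))⁻¹ * χ i ((a, a2), (b, b2)) from rfl,
        show φ i ((a', a2), (b', b2))
          = (((Real.sqrt (p i) : ℝ) : ℂ))⁻¹ * χ i ((a', a2), (b', b2)) from rfl,
        _root_.map_mul, map_inv₀, Complex.conj_ofReal,
        show ((p i : ℝ) : ℂ)⁻¹
            = ((Real.sqrt (p i) : ℝ) : ℂ)⁻¹ * ((Real.sqrt (p i) : ℝ) : ℂ)⁻¹ from by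
          rw [← mul_inv, ← Complex.ofReal_mul, Real.mul_self_sqrt (hpnn i)]]
      ring
    refine ⟨purif_norm _ _ ?_ hent, hent⟩
    rw [Matrix.trace_smul, hptrC i, smul_eq_mul,
      inv_mul_cancel₀ (Complex.ofReal_ne_zero.mpr hpi)]
  -- the δ identity from ∑ Mᴴ M = 1
  have hδ : ∀ c c' : Fin dA, ∑ i, ∑ a, M i a c * (starRingEnd ℂ) (M i a c')
      = (1 : Matrix (Fin dA) (Fin dA) ℂ) c' c := by
    intro c c'
    have h1 : (∑ i, (M i)ᴴ * M i) c' c = (1 : Matrix (Fin dA) (Fin dA) ℂ) c' c := by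
      rw [hM]
    rw [Matrix.sum_apply] at h1
    rw [← h1]
    refine Finset.sum_congr rfl fun i _ => ?_
    rw [Matrix.mul_apply]
    exact Finset.sum_congr rfl fun a _ => by
      rw [Matrix.conjTranspose_apply]; exact mul_comm _ _
  -- mixture identity
  have hmixentry : ∀ y y' : Fin dB × Fin dB',
      ∑ i, ∑ az : Fin dA × Fin dA', χ i (az, y) * (starRingEnd ℂ) (χ i (az, y'))
        = ∑ az : Fin dA × Fin dA', ψ (az, y) * (starRingEnd ℂ) (ψ (az, y')) := by
    intro y y'
    have step1 : ∀ i (az : Fin dA × Fin dA'),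
        χ i (az, y) * (starRingEnd ℂ) (χ i (az, y'))
          = ∑ cc' : Fin dA × Fin dA,
              (M i az.1 cc'.1 * (starRingEnd ℂ) (M i az.1 cc'.2))
                * (ψ ((cc'.1, az.2), y) * (starRingEnd ℂ) (ψ ((cc'.2, az.2), y'))) := by
      intro i az
      rw [show χ i (az, y) = ∑ c0, M i az.1 c0 * ψ ((c0, az.2), y) from rfl,
        show χ i (az, y') = ∑ c0, M i az.1 c0 * ψ ((c0, az.2), y') from rfl,
        map_sum, Finset.sum_mul_sum]
      calc ∑ c0, ∑ c1, (M i az.1 c0 * ψ ((c0, az.2), y))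
              * (starRingEnd ℂ) (M i az.1 c1 * ψ ((c1, az.2), y'))
          = ∑ c0, ∑ c1, (M i az.1 c0 * (starRingEnd ℂ) (M i az.1 c1))
              * (ψ ((c0, az.2), y) * (starRingEnd ℂ) (ψ ((c1, az.2), y'))) :=
            Finset.sum_congr rfl fun c0 _ => Finset.sum_congr rfl fun c1 _ => by
              rw [_root_.map_mul]; ring
        _ = _ := (Fintype.sum_prod_type (f := fun cc' : Fin dA × Fin dA =>
              M i az.1 cc'.1 * (starRingEnd ℂ) (M i az.1 cc'.2)
                * (ψ ((cc'.1, az.2), y) * (starRingEnd ℂ) (ψ ((cc'.2, az.2), y'))))).symm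
    rw [Finset.sum_congr rfl fun i _ => Finset.sum_congr rfl fun az _ => step1 i az]
    have step2 : ∑ i, ∑ az : Fin dA × Fin dA', ∑ cc' : Fin dA × Fin dA,
        (M i az.1 cc'.1 * (starRingEnd ℂ) (M i az.1 cc'.2))
          * (ψ ((cc'.1, az.2), y) * (starRingEnd ℂ) (ψ ((cc'.2, az.2), y')))
        = ∑ cc' : Fin dA × Fin dA, ∑ i, ∑ az : Fin dA × Fin dA',
        (M i az.1 cc'.1 * (starRingEnd ℂ) (M i az.1 cc'.2))
          * (ψ ((cc'.1, az.2), y) * (starRingEnd ℂ) (ψ ((cc'.2, az.2), y'))) := by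
      calc ∑ i, ∑ az : Fin dA × Fin dA', ∑ cc' : Fin dA × Fin dA,
          (M i az.1 cc'.1 * (starRingEnd ℂ) (M i az.1 cc'.2))
            * (ψ ((cc'.1, az.2), y) * (starRingEnd ℂ) (ψ ((cc'.2, az.2), y')))
          = ∑ i, ∑ cc' : Fin dA × Fin dA, ∑ az : Fin dA × Fin dA',
          (M i az.1 cc'.1 * (starRingEnd ℂ) (M i az.1 cc'.2))
            * (ψ ((cc'.1, az.2), y) * (starRingEnd ℂ) (ψ ((cc'.2, az.2), y'))) :=
            Finset.sum_congr rfl fun i _ => Finset.sum_comm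
        _ = _ := Finset.sum_comm
    rw [step2]
    have step3 : ∀ cc' : Fin dA × Fin dA,
        ∑ i, ∑ az : Fin dA × Fin dA',
          (M i az.1 cc'.1 * (starRingEnd ℂ) (M i az.1 cc'.2))
            * (ψ ((cc'.1, az.2), y) * (starRingEnd ℂ) (ψ ((cc'.2, az.2), y')))
        = (1 : Matrix (Fin dA) (Fin dA) ℂ) cc'.2 cc'.1
            * ∑ a2, ψ ((cc'.1, a2), y) * (starRingEnd ℂ) (ψ ((cc'.2, a2), y')) := by
      intro cc'
      rw [← hδ cc'.1 cc'.2, Finset.sum_mul]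
      refine Finset.sum_congr rfl fun i _ => ?_
      rw [Fintype.sum_prod_type, Finset.sum_mul]
      refine Finset.sum_congr rfl fun a _ => ?_
      rw [Finset.mul_sum]
    rw [Finset.sum_congr rfl fun cc' _ => step3 cc']
    rw [Fintype.sum_prod_type]
    conv_rhs => rw [Fintype.sum_prod_type]
    refine Finset.sum_congr rfl fun c _ => ?_
    simp only [Matrix.one_apply, ite_mul, one_mul, zero_mul, Finset.sum_ite_eq,
      Finset.sum_ite_eq', Finset.mem_univ, if_true]
  -- mixture of the density matrices
  have hmix : ∑ i, (p i : ℂ) • σf i = ptraceL (proj ψ) := by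
    ext y y'
    rw [Matrix.sum_apply]
    have hterm : ∀ i, ((p i : ℂ) • σf i) y y'
        = ∑ az : Fin dA × Fin dA', χ i (az, y) * (starRingEnd ℂ) (χ i (az, y')) := by
      intro i
      rw [Matrix.smul_apply, smul_eq_mul]
      by_cases hpi : p i = 0
      · rw [hpi]
        simp only [Complex.ofReal_zero, zero_mul]
        symm
        refine Finset.sum_eq_zero fun az _ => ?_
        rw [hχ0 i hpi (az, y), zero_mul]
      · rw [show σf i y y' = ∑ az : Fin dA × Fin dA',
            φ i (az, y) * (starRingEnd ℂ) (φ i (az, y')) from rfl]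
        rw [Finset.mul_sum]
        refine Finset.sum_congr rfl fun az _ => ?_
        rw [show φ i (az, y) = (((Real.sqrt (p i) : ℝ) : ℂ))⁻¹ * χ i (az, y) from rfl,
          show φ i (az, y') = (((Real.sqrt (p i) : ℝ) : ℂ))⁻¹ * χ i (az, y') from rfl,
          _root_.map_mul, map_inv₀, Complex.conj_ofReal]
        have h5 : ((Real.sqrt (p i) : ℝ) : ℂ) ≠ 0 :=
          Complex.ofReal_ne_zero.mpr
            (Real.sqrt_ne_zero'.mpr (lt_of_le_of_ne (hpnn i) (Ne.symm hpi)))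
        rw [show ((p i : ℝ) : ℂ)
            = ((Real.sqrt (p i) : ℝ) : ℂ) * ((Real.sqrt (p i) : ℝ) : ℂ) from by
          rw [← Complex.ofReal_mul, Real.mul_self_sqrt (hpnn i)]]
        field_simp
    rw [Finset.sum_congr rfl fun i _ => hterm i]
    exact hmixentry y y'
  -- probabilities sum to one
  have hsump : ∑ i, p i = 1 := by
    have h1 : ((∑ i, p i : ℝ) : ℂ) = ((1 : ℝ) : ℂ) := by
      rw [Complex.ofReal_sum]
      calc ∑ i, ((p i : ℝ) : ℂ)
          = ∑ i, ∑ x, χ i x * (starRingEnd ℂ) (χ i x) := by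
            refine Finset.sum_congr rfl fun i _ => ?_
            rw [hpval i, Complex.ofReal_sum]
            exact Finset.sum_congr rfl fun x _ => (mul_conj_eq_norm _).symm
        _ = ∑ i, ∑ az : Fin dA × Fin dA', ∑ y : Fin dB × Fin dB',
              χ i (az, y) * (starRingEnd ℂ) (χ i (az, y)) := by
            refine Finset.sum_congr rfl fun i _ => ?_
            rw [Fintype.sum_prod_type]
        _ = ∑ y : Fin dB × Fin dB', ∑ i, ∑ az : Fin dA × Fin dA',
              χ i (az, y) * (starRingEnd ℂ) (χ i (az, y)) := by
            calc ∑ i, ∑ az : Fin dA × Fin dA', ∑ y : Fin dB × Fin dB',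
                  χ i (az, y) * (starRingEnd ℂ) (χ i (az, y))
                = ∑ i, ∑ y : Fin dB × Fin dB', ∑ az : Fin dA × Fin dA',
                  χ i (az, y) * (starRingEnd ℂ) (χ i (az, y)) :=
                  Finset.sum_congr rfl fun i _ => Finset.sum_comm
              _ = _ := Finset.sum_comm
        _ = ∑ y : Fin dB × Fin dB', ∑ az : Fin dA × Fin dA',
              ψ (az, y) * (starRingEnd ℂ) (ψ (az, y)) :=
            Finset.sum_congr rfl fun y _ => hmixentry y y
        _ = ∑ x, ψ x * (starRingEnd ℂ) (ψ x) := by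
            rw [Finset.sum_comm]
            exact (Fintype.sum_prod_type
              (f := fun x => ψ x * (starRingEnd ℂ) (ψ x))).symm
        _ = ((1 : ℝ) : ℂ) := by
            rw [Finset.sum_congr rfl fun x _ => mul_conj_eq_norm (ψ x),
              ← Complex.ofReal_sum, hψ.1]
    exact_mod_cast h1
  -- conclusion
  have hmain : ∑ i, p i * Ep (((p i : ℝ) : ℂ)⁻¹ • measOut (M i) ρ) ≤ ent ψ := by
    calc ∑ i, p i * Ep (((p i : ℝ) : ℂ)⁻¹ • measOut (M i) ρ)
        ≤ ∑ i, p i * vN (σf i) := by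
          refine Finset.sum_le_sum fun i _ => ?_
          by_cases hpi : p i = 0
          · rw [hpi]; simp
          · have h2 := Ep_le_ent _ _ (hpur i hpi)
            have h3 : ent (φ i) = vN (σf i) := rfl
            rw [h3] at h2
            exact mul_le_mul_of_nonneg_left h2 (hpnn i)
      _ ≤ vN (∑ i, (p i : ℂ) • σf i) :=
          vN_concave p σf hpnn hsump fun i _ => ptraceL_proj_posSemidef _
      _ = ent ψ := by rw [hmix]; rfl
  simpa only [hpdef] using hmain

end QIT
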